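/- Let (W,S) be a dihedral Coxeter system (|S| = 2, possibly infinite). Then for all t, t' ∈ T: ℓ(t') < ℓ(t) if and only if t' ⊑ t and t' ≠ t. -/

import Mathlib

/-!
Formalization of definitions from "orders on Coxeter groups associated with sets of
reflections" (k-intermediate orders, k-Bruhat graphs, k-absolute orders).

All definitions are parametrized by a length function `len : W → ℕ` and a set of
"reflections"; they are instantiated either with a `CoxeterSystem` (`cs.length` and
`cs.IsReflection`) or concretely with the symmetric group `Equiv.Perm (Fin n)`
(inversion number and transpositions).
-/

namespace KBruhatPaper

variable {W : Type*} [Group W]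

/-- One step in the directed graph associated with `len` and the set `X ⊆ T`:
`v` is obtained from `u` by multiplying on the left by an element `t ∈ X`,
with `len u < len v`. -/
def Step (len : W → ℕ) (X : Set W) (u v : W) : Prop :=
  ∃ t ∈ X, v = t * u ∧ len u < len v

/-- The partial order `≤_{L^X}`: `u ≤_{L^X} v` iff `u = v` or there are
`t₁, …, t_r ∈ X` with `len u < len (t₁ u) < ⋯ < len (t_r ⋯ t₁ u)` and
`t_r ⋯ t₁ u = v`.  For `X = T` (all reflections) this is the Bruhat order. -/
def leL (len : W → ℕ) (X : Set W) : W → W → Prop :=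
  Relation.ReflTransGen (Step len X)

/-- The strict order `<_{L^X}`. -/
def ltL (len : W → ℕ) (X : Set W) (u v : W) : Prop :=
  leL len X u v ∧ u ≠ v

/-- The covering relation of the poset `(W, ≤_{L^X})`. -/
def CovL (len : W → ℕ) (X : Set W) (u v : W) : Prop :=
  ltL len X u v ∧ ¬∃ w, ltL len X u w ∧ ltL len X w v

/-- `N(v) = {t ∈ T : len (t * v) < len v}`. -/
def NSet (len : W → ℕ) (T : Set W) (v : W) : Set W :=
  {t ∈ T | len (t * v) < len v}

/-- A reflection subgroup: a subgroup generated by a subset of `T`. -/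
def IsReflSubgroup (T : Set W) (W' : Subgroup W) : Prop :=
  ∃ A ⊆ T, W' = Subgroup.closure A

/-- The canonical Coxeter generators `S' = {t ∈ T : N(t) ∩ W' = {t}}` of a
reflection subgroup `W'`. -/
def CanGens (len : W → ℕ) (T : Set W) (W' : Subgroup W) : Set W :=
  {t ∈ T | NSet len T t ∩ (W' : Set W) = {t}}

/-- The relation `⊑'` on `T`: `t ⊑' t'` iff `t = t'` or there is a dihedral
reflection subgroup `W'` (i.e. with exactly two canonical generators) containing
`t` and `t'`, together with a directed path from `t` to `t'` in the Bruhat graph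
restricted to `W'`. -/
def SqLe' (len : W → ℕ) (T : Set W) (t t' : W) : Prop :=
  t = t' ∨ ∃ W' : Subgroup W, IsReflSubgroup T W' ∧ t ∈ W' ∧ t' ∈ W' ∧
    (CanGens len T W').encard = 2 ∧
    ∃ (n : ℕ) (x : ℕ → W), x 0 = t ∧ x n = t' ∧ (∀ i ≤ n, x i ∈ W') ∧
      ∀ i < n, x i * (x (i + 1))⁻¹ ∈ T ∧ ltL len T (x i) (x (i + 1))

/-- The relation `⊑` on `T`: the transitive closure of `⊑'`. -/
def SqLe (len : W → ℕ) (T : Set W) : W → W → Prop :=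
  Relation.TransGen (SqLe' len T)

/-- `X ⊆ T` is an order ideal of `(T, ⊑)`. -/
def IsIdeal (len : W → ℕ) (T : Set W) (X : Set W) : Prop :=
  X ⊆ T ∧ ∀ t t', SqLe len T t t' → t' ∈ X → t ∈ X

/-- `PFactor len J w wup wJ` expresses that `w = w^J ⬝ w_J` is the (unique) parabolic
factorization of `w` with respect to the set `J` of simple reflections:
`wup = w^J = P^J(w)` and `wJ = w_J ∈ W_J`. -/
def PFactor (len : W → ℕ) (J : Set W) (w wup wJ : W) : Prop :=
  wJ ∈ Subgroup.closure J ∧ (∀ s ∈ J, len wup < len (wup * s)) ∧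
    w = wup * wJ ∧ len w = len wup + len wJ

/-- `QFactor len J w wJ wq` expresses that `w = w'_J ⬝ (ᴶw)` is the (unique) parabolic
factorization of `w` with respect to the set `J` of simple reflections:
`wJ = w'_J ∈ W_J` and `wq = ᴶw = Q^J(w)`. -/
def QFactor (len : W → ℕ) (J : Set W) (w wJ wq : W) : Prop :=
  wJ ∈ Subgroup.closure J ∧ (∀ s ∈ J, len wq < len (s * wq)) ∧
    w = wJ * wq ∧ len w = len wJ + len wq

/-- A chain `e = x₀ → x₁ → ⋯ → x_r = w` of `r` steps in the directed graph with
steps from `X` (for `X = T_k`, a path from `e` to `w` in the `k`-Bruhat graph). -/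
def ChainOfLen (len : W → ℕ) (X : Set W) (w : W) (r : ℕ) : Prop :=
  ∃ x : ℕ → W, x 0 = 1 ∧ x r = w ∧ ∀ i < r, Step len X (x i) (x (i + 1))

/-- `HasAbsLen len X w r` : `r` is the `X`-absolute length of `w`, i.e. the least
number of steps from `X` needed to reach `w` from the identity (for `X = T_k`,
the distance from `e` to `w` in the `k`-Bruhat graph, `ℓ_k(w)`). -/
def HasAbsLen (len : W → ℕ) (X : Set W) (w : W) (r : ℕ) : Prop :=
  IsLeast {r | ChainOfLen len X w r} r

section CoxeterSystem

variable {B : Type*} {M : CoxeterMatrix B}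

/-- The set `T` of reflections of a Coxeter system. -/
def TSet (cs : CoxeterSystem M W) : Set W := {t | cs.IsReflection t}

/-- The set `T_k = {t ∈ T : ℓ(t) ≤ 2k + 1}`. -/
def TkSet (cs : CoxeterSystem M W) (k : ℕ) : Set W :=
  {t | cs.IsReflection t ∧ cs.length t ≤ 2 * k + 1}

/-- The `k`-intermediate order `≤_{L^k}` on `W`. -/
def leLk (cs : CoxeterSystem M W) (k : ℕ) : W → W → Prop :=
  leL cs.length (TkSet cs k)

/-- The strict `k`-intermediate order `<_{L^k}` on `W`. -/
def ltLk (cs : CoxeterSystem M W) (k : ℕ) : W → W → Prop :=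
  ltL cs.length (TkSet cs k)

/-- The Bruhat order on `W`. -/
def bruhatLE (cs : CoxeterSystem M W) : W → W → Prop :=
  leL cs.length (TSet cs)

/-- The strict Bruhat order on `W`. -/
def bruhatLT (cs : CoxeterSystem M W) : W → W → Prop :=
  ltL cs.length (TSet cs)

end CoxeterSystem

section SymmetricGroup

/-- The number of inversions of a permutation of `Fin n`; this is the Coxeter
length of the permutation with respect to the standard Coxeter presentation
of the symmetric group. -/
def invCount {n : ℕ} (w : Equiv.Perm (Fin n)) : ℕ :=
  (Finset.univ.filter fun p : Fin n × Fin n => p.1 < p.2 ∧ w p.2 < w p.1).card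

/-- The set of transpositions: the reflections of the symmetric group. -/
def swaps (n : ℕ) : Set (Equiv.Perm (Fin n)) := {σ | σ.IsSwap}

/-- The set of simple transpositions `s_i = (i, i+1)`: the standard Coxeter
generators of the symmetric group. -/
def simples (n : ℕ) : Set (Equiv.Perm (Fin n)) :=
  {σ | ∃ i j : Fin n, (i : ℕ) + 1 = (j : ℕ) ∧ σ = Equiv.swap i j}

/-- The set `T_k` for the symmetric group: transpositions of length at most `2k + 1`. -/
def swapsK (n k : ℕ) : Set (Equiv.Perm (Fin n)) :=
  {σ | σ.IsSwap ∧ invCount σ ≤ 2 * k + 1}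

end SymmetricGroup

end KBruhatPaper

open KBruhatPaper


section AuxLemmas

open CoxeterSystem Relation

variable {W : Type*} [Group W]

private theorem ltL_of_step {len : W → ℕ} {X : Set W} {u v : W} (h : Step len X u v) :
    ltL len X u v := by
  refine ⟨Relation.ReflTransGen.single h, ?_⟩
  rintro rfl
  obtain ⟨r, -, -, h4⟩ := h
  omega

private theorem le_len_of_leL {len : W → ℕ} {X : Set W} {u v : W} (h : leL len X u v) :
    len u ≤ len v := by
  induction h with
  | refl => exact le_rfl
  | tail _ h2 ih => obtain ⟨r, -, -, h4⟩ := h2; omega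

private theorem lt_len_of_ltL {len : W → ℕ} {X : Set W} {u v : W} (h : ltL len X u v) :
    len u < len v := by
  obtain ⟨hle, hne⟩ := h
  rcases Relation.ReflTransGen.cases_head hle with rfl | ⟨c, hc, hcv⟩
  · exact absurd rfl hne
  · have := le_len_of_leL hcv
    obtain ⟨r, -, -, h4⟩ := hc
    omega

private theorem sqle'_len {len : W → ℕ} {T : Set W} {a b : W} (h : SqLe' len T a b) :
    a = b ∨ len a < len b := by
  rcases h with rfl | ⟨W', -, -, -, -, n, x, hx0, hxn, -, hstep⟩
  · exact Or.inl rfl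
  · cases n with
    | zero => exact Or.inl (hx0.symm.trans hxn)
    | succ m =>
      right
      have key : ∀ i, i ≤ m + 1 → 1 ≤ i → len (x 0) < len (x i) := by
        intro i
        induction i with
        | zero => omega
        | succ p ihp =>
          intro hi _
          have hs := lt_len_of_ltL (hstep p (by omega)).2
          rcases Nat.eq_zero_or_pos p with h0 | hp
          · subst h0; exact hs
          · exact lt_trans (ihp (by omega) hp) hs
      rw [← hx0, ← hxn]
      exact key (m + 1) le_rfl (by omega)

variable {B : Type*} {M' : CoxeterMatrix B}

private theorem refl_alt (cs : CoxeterSystem M' W) (k : ℕ) (i j : B) :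
    cs.IsReflection (cs.wordProd (alternatingWord i j (2 * k + 1))) := by
  induction k generalizing i j with
  | zero =>
    have h1 : alternatingWord i j (2 * 0 + 1) = [j] := rfl
    rw [h1]
    simpa [cs.wordProd_cons] using cs.isReflection_simple j
  | succ k ih =>
    have h1 : 2 * (k + 1) + 1 = (2 * k + 2) + 1 := by ring
    have h2 : alternatingWord i j ((2 * k + 2) + 1)
        = j :: alternatingWord i j (2 * k + 2) := by
      rw [alternatingWord_succ']
      have hev : Even (2 * k + 2) := ⟨k + 1, by ring⟩
      simp [hev]
    have h3 : alternatingWord i j (2 * k + 2)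
        = (alternatingWord j i (2 * k + 1)).concat j := alternatingWord_succ i j _
    rw [h1, h2, h3, cs.wordProd_cons, List.concat_eq_append, cs.wordProd_append]
    have h4 : cs.wordProd [j] = cs.simple j := by simp [cs.wordProd_cons]
    rw [h4, ← mul_assoc]
    have := (ih j i).conj (cs.simple j)
    rwa [cs.inv_simple] at this

section Rank2

variable {M : CoxeterMatrix (Fin 2)}

private theorem exists_alt (cs : CoxeterSystem M W) :
    ∀ (n : ℕ) (w : W), cs.length w = n →
      ∃ i j : Fin 2, i ≠ j ∧ w = cs.wordProd (alternatingWord i j n) := by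
  intro n
  induction n with
  | zero =>
    intro w hw
    exact ⟨0, 1, by decide, by rw [cs.length_eq_zero_iff.mp hw]; simp [alternatingWord]⟩
  | succ n ihn =>
    intro w hw
    have hw1 : w ≠ 1 := by
      rintro rfl
      simp at hw
    obtain ⟨i, hi⟩ := cs.exists_leftDescent_of_ne_one hw1
    have hlen : cs.length (cs.simple i * w) = n := by
      have := cs.isLeftDescent_iff.mp hi
      omega
    have hw2 : w = cs.simple i * (cs.simple i * w) := by
      rw [cs.simple_mul_simple_cancel_left]
    obtain ⟨i', j', hij, hrep⟩ := ihn (cs.simple i * w) hlen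
    cases n with
    | zero =>
      have hws : w = cs.simple i := by
        rw [hw2, hrep]; simp [alternatingWord]
      refine ⟨if i = 0 then 1 else 0, i, ?_, ?_⟩
      · exact (by decide : ∀ a : Fin 2, (if a = 0 then (1 : Fin 2) else 0) ≠ a) i
      · have : alternatingWord (if i = 0 then (1 : Fin 2) else 0) i 1 = [i] := rfl
        rw [this, hws]
        simp [cs.wordProd_cons]
    | succ m =>
      have halt : alternatingWord i' j' (m + 1)
          = (if Even m then j' else i') :: alternatingWord i' j' m :=
        alternatingWord_succ' i' j' m
      have hic : i ≠ (if Even m then j' else i') := by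
        intro h
        have hweq : w = cs.wordProd (alternatingWord i' j' m) := by
          rw [hw2, hrep, halt, cs.wordProd_cons, h, cs.simple_mul_simple_cancel_left]
        have hle := cs.length_wordProd_le (alternatingWord i' j' m)
        rw [length_alternatingWord] at hle
        rw [hweq] at hw
        omega
      have hcc' : (if Even (m + 1) then j' else i') ≠ (if Even m then j' else i') := by
        rcases Nat.even_or_odd m with he | ho
        · rw [if_pos he, if_neg (by rw [Nat.even_add_one]; exact fun h => h he)]
          exact hij
        · have hm : ¬ Even m := Nat.not_even_iff_odd.mpr ho
          rw [if_neg hm, if_pos (Nat.even_add_one.mpr hm)]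
          exact hij.symm
      have hic' : i = (if Even (m + 1) then j' else i') := by
        have key : ∀ a b b' : Fin 2, a ≠ b → b' ≠ b → a = b' := by decide
        exact key i _ _ hic hcc'
      refine ⟨i', j', hij, ?_⟩
      rw [hw2, hrep, ← cs.wordProd_cons, hic']
      congr 1
      exact (alternatingWord_succ' i' j' (m + 1)).symm

private theorem refl_of_odd (cs : CoxeterSystem M W) {w : W} (h : Odd (cs.length w)) :
    cs.IsReflection w := by
  obtain ⟨k, hk⟩ := h
  obtain ⟨i, j, -, hrep⟩ := exists_alt cs (cs.length w) w rfl
  rw [hk] at hrep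
  rw [hrep]
  exact refl_alt cs k i j

end Rank2

end AuxLemmas

/-- in a dihedral Coxeter system (`|S| = 2`, possibly infinite), for
reflections `t, t'` one has `ℓ(t') < ℓ(t)` iff `t' ⊑ t` and `t' ≠ t`. -/
theorem stmt_14 {W : Type*} [Group W] {M : CoxeterMatrix (Fin 2)}
    (cs : CoxeterSystem M W) {t t' : W}
    (ht : cs.IsReflection t) (ht' : cs.IsReflection t') :
    cs.length t' < cs.length t ↔ (SqLe cs.length (TSet cs) t' t ∧ t' ≠ t) := by
  constructor
  · intro hlt
    obtain ⟨k, hk⟩ := ht.odd_length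
    obtain ⟨k', hk'⟩ := ht'.odd_length
    have h2 : cs.length t' + 1 < cs.length t := by omega
    -- the two simple reflections are distinct
    have hs01 : cs.simple 0 ≠ cs.simple 1 := by
      intro h
      have hall : ∀ ω : List (Fin 2), cs.wordProd ω = 1 ∨ cs.wordProd ω = cs.simple 0 := by
        intro ω
        induction ω with
        | nil => left; exact cs.wordProd_nil
        | cons a ω ih =>
          have ha : cs.simple a = cs.simple 0 := by
            fin_cases a
            · rfl
            · exact h.symm
          rw [cs.wordProd_cons, ha]
          rcases ih with h1 | h1 <;> rw [h1]
          · right; rw [mul_one]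
          · left; exact cs.simple_mul_simple_self 0
      obtain ⟨ω, -, hteq⟩ := cs.exists_reduced_word' t
      have hlt3 : 3 ≤ cs.length t := by omega
      rcases hall ω with h1 | h1
      · rw [hteq, h1, cs.length_one] at hlt3; omega
      · rw [hteq, h1, cs.length_simple] at hlt3; omega
    -- the canonical generators of ⊤ are the two simple reflections
    have hcan : CanGens cs.length (TSet cs) ⊤ = {cs.simple 0, cs.simple 1} := by
      ext u
      constructor
      · rintro ⟨hu, hN⟩
        rw [Subgroup.coe_top, Set.inter_univ] at hN
        have hune : u ≠ 1 := by
          obtain ⟨a, ha⟩ := hu.odd_length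
          rintro rfl
          rw [cs.length_one] at ha
          omega
        obtain ⟨i, hi⟩ := cs.exists_leftDescent_of_ne_one hune
        have hmem : cs.simple i ∈ NSet cs.length (TSet cs) u :=
          ⟨cs.isReflection_simple i, hi⟩
        rw [hN] at hmem
        have hsu : cs.simple i = u := hmem
        rw [← hsu]
        fin_cases i
        · exact Or.inl rfl
        · exact Or.inr rfl
      · intro hu
        have key : ∀ i : Fin 2, cs.simple i ∈ CanGens cs.length (TSet cs) (⊤ : Subgroup W) := by
          intro i
          refine ⟨cs.isReflection_simple i, ?_⟩
          rw [Subgroup.coe_top, Set.inter_univ]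
          ext r
          constructor
          · rintro ⟨hr, hlen⟩
            rw [cs.length_simple] at hlen
            have h0 : cs.length (r * cs.simple i) = 0 := by omega
            have h1 := cs.length_eq_zero_iff.mp h0
            exact (eq_inv_of_mul_eq_one_left h1).trans (cs.inv_simple i)
          · rintro rfl
            refine ⟨cs.isReflection_simple i, ?_⟩
            rw [cs.simple_mul_simple_self, cs.length_one, cs.length_simple]
            omega
        rcases hu with rfl | rfl
        · exact key 0
        · exact key 1
    -- construct the intermediate element z
    obtain ⟨ω, hred, hteq⟩ := cs.exists_reduced_word' t
    have hωlen : ω.length = cs.length t := by rw [hteq]; exact hred.symm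
    set z := cs.wordProd (ω.take (cs.length t' + 1)) with hz
    have hzlen : cs.length z = cs.length t' + 1 := by
      have htk := CoxeterSystem.IsReduced.take (cs := cs) hred (cs.length t' + 1)
      rw [CoxeterSystem.IsReduced] at htk
      rw [hz, htk, List.length_take, hωlen]
      omega
    have hr1 : cs.IsReflection (z * t'⁻¹) := by
      apply refl_of_odd cs
      rw [Nat.odd_iff]
      have hmod := cs.length_mul_mod_two z t'⁻¹
      rw [cs.length_inv] at hmod
      rw [hmod]
      omega
    have hr2 : cs.IsReflection (t * z⁻¹) := by
      apply refl_of_odd cs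
      rw [Nat.odd_iff]
      have hmod := cs.length_mul_mod_two t z⁻¹
      rw [cs.length_inv] at hmod
      rw [hmod]
      omega
    have step1 : Step cs.length (TSet cs) t' z :=
      ⟨z * t'⁻¹, hr1, by group, by omega⟩
    have step2 : Step cs.length (TSet cs) z t :=
      ⟨t * z⁻¹, hr2, by group, by omega⟩
    refine ⟨Relation.TransGen.single (Or.inr ⟨⊤, ?_, Subgroup.mem_top _, Subgroup.mem_top _, ?_,
      2, fun i => if i = 0 then t' else if i = 1 then z else t, rfl, rfl,
      fun i _ => Subgroup.mem_top _, ?_⟩), ?_⟩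
    · exact ⟨Set.range cs.simple, by rintro _ ⟨i, rfl⟩; exact cs.isReflection_simple i,
        cs.subgroup_closure_range_simple.symm⟩
    · rw [hcan]
      exact Set.encard_pair hs01
    · intro i hi
      interval_cases i
      · refine ⟨?_, ?_⟩
        · show t' * z⁻¹ ∈ TSet cs
          have : t' * z⁻¹ = (z * t'⁻¹)⁻¹ := by group
          rw [this]
          exact hr1.isReflection_inv
        · exact ltL_of_step step1
      · refine ⟨?_, ?_⟩
        · show z * t⁻¹ ∈ TSet cs
          have : z * t⁻¹ = (t * z⁻¹)⁻¹ := by group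
          rw [this]
          exact hr2.isReflection_inv
        · exact ltL_of_step step2
    · intro he
      rw [he] at hlt
      omega
  · rintro ⟨hsq, hne⟩
    have key : t' = t ∨ cs.length t' < cs.length t := by
      clear hne ht
      induction hsq with
      | single h => exact sqle'_len h
      | tail _ h2 ih =>
        rcases ih with rfl | h
        · exact sqle'_len h2
        · rcases sqle'_len h2 with rfl | h'
          · exact Or.inr h
          · exact Or.inr (lt_trans h h')
    rcases key with rfl | h
    · exact absurd rfl hne
    · exact h
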